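/- For every real α > 1 there exist a number of jobs m, processing times p : Fin m → ℕ (all positive), and preferred schedules σ₁, σ₂ of two agents, such that: every schedule τ that is Pareto-consistent with the profile (σ₁, σ₂) satisfies max_{a∈{1,2}} T(τ, σ_a) > α · min over all schedules ρ of max_{a∈{1,2}} T(ρ, σ_a). -/
import Mathlib

def completionTime {m : ℕ} (p : Fin m → ℕ) (τ : Equiv.Perm (Fin m)) (i : Fin m) : ℕ :=
  ∑ j ∈ Finset.univ.filter (fun j => τ j ≤ τ i), p j

def tardiness {m : ℕ} (p : Fin m → ℕ) (τ σ : Equiv.Perm (Fin m)) : ℕ :=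
  ∑ i : Fin m, (completionTime p τ i - completionTime p σ i)

namespace NoParetoAux

/-- processing times: job 0 is big (2t), the other 2t jobs are unit jobs. -/
def bigP (t : ℕ) : Fin (2*t+1) → ℕ := fun i => if i.val = 0 then 2*t else 1

/-- second agent's preferred schedule: job 0 first, units reversed. -/
def revFun (t : ℕ) (i : Fin (2*t+1)) : Fin (2*t+1) :=
  ⟨if i.val = 0 then 0 else 2*t+1 - i.val, by have := i.isLt; split_ifs <;> omega⟩

def revPerm (t : ℕ) : Equiv.Perm (Fin (2*t+1)) :=
  Function.Involutive.toPerm (revFun t)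
    (by
      intro i
      have hi := i.isLt
      apply Fin.ext
      simp only [revFun]
      split_ifs <;> omega)

lemma revPerm_apply (t : ℕ) (i : Fin (2*t+1)) :
    ((revPerm t) i).val = if i.val = 0 then 0 else 2*t+1 - i.val := rfl

def rho0fun (t : ℕ) (i : Fin (2*t+1)) : Fin (2*t+1) :=
  ⟨if i.val = 0 then 2*t else i.val - 1, by have := i.isLt; split_ifs <;> omega⟩

lemma rho0fun_inj (t : ℕ) : Function.Injective (rho0fun t) := by
  intro a b h
  have ha := a.isLt; have hb := b.isLt
  rw [Fin.ext_iff] at h ⊢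
  simp only [rho0fun] at h
  split_ifs at h <;> omega

noncomputable def rho0 (t : ℕ) : Equiv.Perm (Fin (2*t+1)) :=
  Equiv.ofBijective (rho0fun t) ((Finite.injective_iff_bijective).mp (rho0fun_inj t))

lemma rho0_apply (t : ℕ) (i : Fin (2*t+1)) : rho0 t i = rho0fun t i := rfl

lemma card_le_eq {n : ℕ} (τ : Equiv.Perm (Fin n)) (i : Fin n) :
    (Finset.univ.filter (fun j => τ j ≤ τ i)).card = (τ i).val + 1 := by
  rw [← Fin.card_Iic (τ i)]
  apply Finset.card_bij' (fun j _ => τ j) (fun v _ => τ.symm v) <;> simp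

lemma comp_eq (t : ℕ) (ht : 0 < t) (τ : Equiv.Perm (Fin (2*t+1))) (i : Fin (2*t+1)) :
    completionTime (bigP t) τ i
      = (τ i).val + 1 + (if τ 0 ≤ τ i then 2*t - 1 else 0) := by
  unfold completionTime
  have hp : ∀ j : Fin (2*t+1), bigP t j = 1 + (if j = 0 then 2*t-1 else 0) := by
    intro j
    simp only [bigP, Fin.ext_iff, Fin.val_zero]
    split_ifs <;> omega
  rw [Finset.sum_congr rfl (fun j _ => hp j), Finset.sum_add_distrib]
  rw [Finset.sum_ite_eq' _ (0 : Fin (2*t+1)) (fun _ => 2*t-1)]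
  simp only [Finset.sum_const, smul_eq_mul, mul_one, Finset.mem_filter, Finset.mem_univ,
    true_and, card_le_eq]

lemma tard_eq (t : ℕ) (ht : 0 < t) (τ σ : Equiv.Perm (Fin (2*t+1)))
    (h0τ : τ 0 = 0) (h0σ : σ 0 = 0) :
    tardiness (bigP t) τ σ = ∑ i : Fin (2*t+1), ((τ i).val - (σ i).val) := by
  unfold tardiness
  refine Finset.sum_congr rfl (fun i _ => ?_)
  rw [comp_eq t ht, comp_eq t ht, h0τ, h0σ]
  rw [if_pos (Fin.zero_le _), if_pos (Fin.zero_le _)]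
  omega

lemma odd_sum (t : ℕ) : ∑ s ∈ Finset.range t, (2*s+1) = t*t := by
  induction t with
  | zero => simp
  | succ n ih => rw [Finset.sum_range_succ, ih]; ring

lemma sum_lb (t : ℕ) :
    t*t ≤ ∑ j : Fin (2*t+1), (2*(j:ℕ) - (2*t+1)) := by
  rw [Fin.sum_univ_eq_sum_range (fun j => 2*j - (2*t+1)) (2*t+1)]
  have hsub : Finset.Ico (t+1) (2*t+1) ⊆ Finset.range (2*t+1) := by
    intro x hx
    simp only [Finset.mem_Ico] at hx
    simp only [Finset.mem_range]
    omega
  have h1 : ∑ j ∈ Finset.Ico (t+1) (2*t+1), (2*j - (2*t+1)) = t*t := by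
    rw [Finset.sum_Ico_eq_sum_range]
    have hc : 2*t+1 - (t+1) = t := by omega
    rw [hc]
    have h2 : ∀ s ∈ Finset.range t, 2*(t+1+s) - (2*t+1) = 2*s+1 := by
      intro s _; omega
    rw [Finset.sum_congr rfl h2, odd_sum]
  calc t*t = ∑ j ∈ Finset.Ico (t+1) (2*t+1), (2*j - (2*t+1)) := h1.symm
    _ ≤ _ := Finset.sum_le_sum_of_subset hsub

lemma tard_rho0_le (t : ℕ) (ht : 0 < t) (σ : Equiv.Perm (Fin (2*t+1)))
    (h0σ : σ 0 = 0) : tardiness (bigP t) (rho0 t) σ ≤ 2*t := by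
  unfold tardiness
  have hbound : ∀ i : Fin (2*t+1),
      completionTime (bigP t) (rho0 t) i - completionTime (bigP t) σ i
        ≤ (if i = 0 then 2*t else 0) := by
    intro i
    rw [comp_eq t ht, comp_eq t ht, h0σ, if_pos (Fin.zero_le _)]
    have h00 : ((rho0 t) 0).val = 2*t := by
      rw [rho0_apply]; simp [rho0fun]
    have hi := i.isLt
    have hσ0 : (σ 0).val = 0 := by rw [h0σ]; rfl
    by_cases h : i = 0
    · subst h
      rw [if_pos (le_refl _), if_pos rfl, h00, hσ0]
      omega
    · have hvi : i.val ≠ 0 := fun hc => h (Fin.ext (by simp [hc]))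
      have hri : ((rho0 t) i).val = i.val - 1 := by
        rw [rho0_apply]; simp [rho0fun, hvi]
      have hnle : ¬ ((rho0 t) 0 ≤ (rho0 t) i) := by
        rw [Fin.le_def, h00, hri]; omega
      rw [if_neg hnle, if_neg h, hri]
      omega
  calc ∑ i : Fin (2*t+1), (completionTime (bigP t) (rho0 t) i - completionTime (bigP t) σ i)
      ≤ ∑ i : Fin (2*t+1), (if i = 0 then 2*t else 0) :=
        Finset.sum_le_sum (fun i _ => hbound i)
    _ = 2*t := by rw [Finset.sum_ite_eq' _ (0 : Fin (2*t+1))]; simp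

end NoParetoAux

theorem no_pareto_efficient_approx_max_tardiness (α : ℝ) (hα : 1 < α) :
    ∃ (m : ℕ) (p : Fin m → ℕ) (σ₁ σ₂ : Equiv.Perm (Fin m)),
      (∀ i, 0 < p i) ∧
      ∃ ρmin : Equiv.Perm (Fin m),
        (∀ ρ : Equiv.Perm (Fin m),
          max (tardiness p ρmin σ₁) (tardiness p ρmin σ₂)
            ≤ max (tardiness p ρ σ₁) (tardiness p ρ σ₂)) ∧
        ∀ τ : Equiv.Perm (Fin m),
          (∀ k ℓ : Fin m, σ₁ k < σ₁ ℓ → σ₂ k < σ₂ ℓ → τ k < τ ℓ) →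
          α * ((max (tardiness p ρmin σ₁) (tardiness p ρmin σ₂) : ℕ) : ℝ)
            < ((max (tardiness p τ σ₁) (tardiness p τ σ₂) : ℕ) : ℝ) := by
  classical
  open NoParetoAux in
  set t : ℕ := ⌈4*α⌉₊ + 1 with hT
  have ht : 0 < t := Nat.succ_pos _
  have htR : 4*α < (t : ℝ) := by
    have h1 : 4*α ≤ (⌈4*α⌉₊ : ℝ) := Nat.le_ceil _
    have : ((⌈4*α⌉₊ : ℕ) : ℝ) < t := by exact_mod_cast Nat.lt_succ_self _
    linarith
  refine ⟨2*t+1, bigP t, Equiv.refl _, revPerm t, ?_, ?_⟩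
  · intro i; simp only [bigP]; split_ifs <;> omega
  · obtain ⟨ρmin, -, hmin⟩ := Finset.exists_min_image (Finset.univ)
      (fun ρ : Equiv.Perm (Fin (2*t+1)) =>
        max (tardiness (bigP t) ρ (Equiv.refl _)) (tardiness (bigP t) ρ (revPerm t)))
      ⟨1, Finset.mem_univ 1⟩
    refine ⟨ρmin, fun ρ => hmin ρ (Finset.mem_univ ρ), ?_⟩
    intro τ hcons
    -- the minimum value is at most 2*t
    have hrev0 : (revPerm t) 0 = 0 := Fin.ext (by rw [revPerm_apply]; simp)
    have hVle : max (tardiness (bigP t) ρmin (Equiv.refl _)) (tardiness (bigP t) ρmin (revPerm t))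
        ≤ 2*t := by
      refine le_trans (hmin (rho0 t) (Finset.mem_univ _)) ?_
      exact max_le (tard_rho0_le t ht _ rfl) (tard_rho0_le t ht _ hrev0)
    -- τ schedules job 0 first
    have h0τ : τ 0 = 0 := by
      have hlt : ∀ i : Fin (2*t+1), i ≠ 0 → τ 0 < τ i := by
        intro i hi
        apply hcons
        · simpa using Fin.pos_of_ne_zero hi
        · rw [hrev0]
          apply Fin.pos_of_ne_zero
          intro hc
          exact hi (by simpa using (revPerm t).injective (hc.trans hrev0.symm))
      by_contra h
      have hj : τ.symm 0 ≠ 0 := by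
        intro hc
        have h2 := congrArg τ hc
        rw [Equiv.apply_symm_apply] at h2
        exact h h2.symm
      have := hlt (τ.symm 0) hj
      rw [Equiv.apply_symm_apply] at this
      exact absurd this (Fin.not_lt_zero _)
    -- lower bound on the max tardiness of τ
    have hT1 : tardiness (bigP t) τ (Equiv.refl _)
        = ∑ i : Fin (2*t+1), ((τ i).val - i.val) := tard_eq t ht _ _ h0τ rfl
    have hT2 : tardiness (bigP t) τ (revPerm t)
        = ∑ i : Fin (2*t+1), ((τ i).val - ((revPerm t) i).val) := tard_eq t ht _ _ h0τ hrev0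
    have hsum : t*t ≤ tardiness (bigP t) τ (Equiv.refl _) + tardiness (bigP t) τ (revPerm t) := by
      rw [hT1, hT2, ← Finset.sum_add_distrib]
      have hle : ∀ i ∈ Finset.univ, (2*((τ i):ℕ) - (2*t+1))
          ≤ ((τ i).val - i.val) + ((τ i).val - ((revPerm t) i).val) := by
        intro i _
        have hr := revPerm_apply t i
        have hi := i.isLt
        split_ifs at hr <;> omega
      refine le_trans ?_ (Finset.sum_le_sum hle)
      rw [Equiv.sum_comp τ (fun j : Fin (2*t+1) => 2*(j:ℕ) - (2*t+1))]
      exact sum_lb t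
    -- final real arithmetic
    set V := max (tardiness (bigP t) ρmin (Equiv.refl _)) (tardiness (bigP t) ρmin (revPerm t))
    set M := max (tardiness (bigP t) τ (Equiv.refl _)) (tardiness (bigP t) τ (revPerm t))
    have hMlb : t*t ≤ 2*M := by
      have := le_max_left (tardiness (bigP t) τ (Equiv.refl _)) (tardiness (bigP t) τ (revPerm t))
      have := le_max_right (tardiness (bigP t) τ (Equiv.refl _)) (tardiness (bigP t) τ (revPerm t))
      omega
    have hVR : (V : ℝ) ≤ 2*(t:ℝ) := by exact_mod_cast hVle
    have hMR : (t:ℝ)*(t:ℝ) ≤ 2*(M:ℝ) := by exact_mod_cast hMlb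
    have htpos : (0:ℝ) < t := by positivity
    have hα0 : (0:ℝ) < α := by linarith
    nlinarith [mul_le_mul_of_nonneg_left hVR (le_of_lt hα0), mul_lt_mul_of_pos_right htR htpos]
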